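/- For every terminating SRTM M over a commutative semiring R with oracle access to LimRec(R), there exists a terminating SRTM M' over R with oracle access to LimRec(R) such that ‖M'‖ = ‖M‖, the computation path lengths of M' are polynomially bounded whenever those of M are, and for all states q, q' of M', all tape symbols σ, σ' and each d ∈ {−1, 1}, there is at most one label w with ((q, σ), (q', σ'), d, w) in the transition relation of M'. -/

import Mathlib

open scoped Classical


open Classical in
/-- The limited recognition function `rec_{R''}` for a (finite) set `R'' ⊆ R`. -/
noncomputable def limRecFun {R : Type} [CommSemiring R] (S : Set R) (x : R) : R :=
  if x ∈ S then ∑ᶠ r ∈ S, r else x + ∑ᶠ r ∈ S, r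

/-- Labels of transitions of an SRTM with oracle access to `LimRec(R)`:
a fixed weight, the placeholder `X`, or a limited recognition oracle. -/
inductive OLabel (R : Type) : Type where
  | const : R → OLabel R
  | ph : OLabel R
  | orac : Set R → OLabel R

/-- An SRTM over `R` with oracle access to `LimRec(R)`: exactly like an SRTM,
but transition labels come from `R' ∪ {X} ∪ LimRec(R)`. -/
structure OSRTM (R : Type) (A : Type) where
  nQ : ℕ
  nE : ℕ
  blankE : Fin nE
  phE : Fin nE
  blank_ne_ph : blankE ≠ phE
  start : Fin nQ
  weights : Set R
  weights_fin : weights.Finite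
  trans : Set ((Fin nQ × (A ⊕ Fin nE)) × (Fin nQ × (A ⊕ Fin nE)) × Bool × OLabel R)
  trans_fin : trans.Finite
  trans_wt : ∀ t ∈ trans, ∀ r : R, t.2.2.2 = OLabel.const r → r ∈ weights
  trans_orac : ∀ t ∈ trans, ∀ S : Set R, t.2.2.2 = OLabel.orac S → S.Finite

namespace OSRTM

variable {R A : Type}

abbrev Sym (M : OSRTM R A) : Type := A ⊕ Fin M.nE

abbrev Trans (M : OSRTM R A) : Type :=
  (Fin M.nQ × M.Sym) × (Fin M.nQ × M.Sym) × Bool × OLabel R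

abbrev Config (M : OSRTM R A) : Type := Fin M.nQ × (ℕ → M.Sym × R) × ℕ

def applicable (M : OSRTM R A) (c : M.Config) : Set M.Trans :=
  {t | t ∈ M.trans ∧ t.1.1 = c.1 ∧ t.1.2 = (c.2.1 c.2.2).1}

def stepTo (M : OSRTM R A) (t : M.Trans) (c : M.Config) : M.Config :=
  ⟨t.2.1.1,
    Function.update c.2.1 c.2.2 (t.2.1.2, (c.2.1 c.2.2).2),
    ((c.2.2 : ℤ) + (if t.2.2.1 then 1 else -1)).natAbs⟩

/-- The weight of a transition: a constant, the value under the head, or the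
value of a limited recognition function on the value under the head. -/
noncomputable def wt [CommSemiring R] (M : OSRTM R A) (t : M.Trans) (c : M.Config) : R :=
  match t.2.2.2 with
  | .const r => r
  | .ph => (c.2.1 c.2.2).2
  | .orac S => limRecFun S (c.2.1 c.2.2).2

noncomputable def val [CommSemiring R] (M : OSRTM R A) : ℕ → M.Config → R
  | 0, _ => 1
  | n + 1, c =>
    if M.applicable c = ∅ then 1
    else ∑ᶠ t ∈ M.applicable c, M.wt t c * val M n (M.stepTo t c)

def initTape [Zero R] (M : OSRTM R A) (s : List (A ⊕ R)) : ℕ → M.Sym × R := fun i =>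
  match s[i]? with
  | some (Sum.inl a) => (Sum.inl a, 0)
  | some (Sum.inr r) => (Sum.inr M.phE, r)
  | none => (Sum.inr M.blankE, 0)

def initConfig [Zero R] (M : OSRTM R A) (s : List (A ⊕ R)) : M.Config :=
  ⟨M.start, M.initTape s, 0⟩

def StepRel (M : OSRTM R A) (c c' : M.Config) : Prop :=
  ∃ t ∈ M.applicable c, c' = M.stepTo t c

def PathLen (M : OSRTM R A) : ℕ → M.Config → M.Config → Prop
  | 0, c, c' => c' = c
  | n + 1, c, c'' => ∃ c', StepRel M c c' ∧ PathLen M n c' c''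

def BoundedBy [Zero R] (M : OSRTM R A) (ℓ : List (A ⊕ R) → ℕ) : Prop :=
  ∀ (s : List (A ⊕ R)) (n : ℕ) (c : M.Config),
    PathLen M n (M.initConfig s) c → n ≤ ℓ s

def Terminating [Zero R] (M : OSRTM R A) : Prop := ∃ ℓ, M.BoundedBy ℓ

noncomputable def output [CommSemiring R] (M : OSRTM R A)
    (ℓ : List (A ⊕ R) → ℕ) (s : List (A ⊕ R)) : R :=
  val M (ℓ s) (M.initConfig s)

end OSRTM

/-- `NP_new(R)^{LimRec(R)}`: functions computed by terminating SRTMs over `R`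
with oracle access to `LimRec(R)` and polynomially bounded path lengths. -/
def NPnewO (R : Type) [CommSemiring R] (A : Type) [Fintype A]
    (f : List (A ⊕ R) → R) : Prop :=
  ∃ (M : OSRTM R A) (ℓ : List (A ⊕ R) → ℕ) (p : Polynomial ℕ),
    M.BoundedBy ℓ ∧ (∀ s, ℓ s ≤ p.eval s.length) ∧ ∀ s, f s = M.output ℓ s

namespace OSRTMNorm

variable {R A : Type}

/-- Number of transitions of `M`. -/
noncomputable def nT (M : OSRTM R A) : ℕ := M.trans_fin.toFinset.card

/-- An injective (on `M.trans`) index of transitions. -/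
noncomputable def idx (M : OSRTM R A) (t : M.Trans) : Fin (nT M + 1) :=
  if h : t ∈ M.trans_fin.toFinset then (M.trans_fin.toFinset.equivFin ⟨t, h⟩).castSucc
  else Fin.last _

lemma idx_injOn (M : OSRTM R A) : Set.InjOn (idx M) M.trans := by
  intro t ht t' ht' h
  have h1 : t ∈ M.trans_fin.toFinset := M.trans_fin.mem_toFinset.2 ht
  have h2 : t' ∈ M.trans_fin.toFinset := M.trans_fin.mem_toFinset.2 ht'
  have e1 : idx M t = (M.trans_fin.toFinset.equivFin ⟨t, h1⟩).castSucc := by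
    unfold idx; exact dif_pos h1
  have e2 : idx M t' = (M.trans_fin.toFinset.equivFin ⟨t', h2⟩).castSucc := by
    unfold idx; exact dif_pos h2
  rw [e1, e2] at h
  have := M.trans_fin.toFinset.equivFin.injective (Fin.castSucc_injective _ h)
  exact congrArg Subtype.val this

/-- State encoding: a pair (original state, copy index) as a single `Fin`. -/
noncomputable def enc (M : OSRTM R A) : Fin M.nQ × Fin (nT M + 1) ≃ Fin (M.nQ * (nT M + 1)) :=
  finProdFinEquiv

/-- Lift a transition of `M` to the normalized machine, with source copy `j` and
target copy `idx M t`. -/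
noncomputable def lift (M : OSRTM R A) (j : Fin (nT M + 1)) (t : M.Trans) :
    (Fin (M.nQ * (nT M + 1)) × (A ⊕ Fin M.nE)) ×
      (Fin (M.nQ * (nT M + 1)) × (A ⊕ Fin M.nE)) × Bool × OLabel R :=
  ((enc M (t.1.1, j), t.1.2), (enc M (t.2.1.1, idx M t), t.2.1.2), t.2.2.1, t.2.2.2)

/-- The normalized machine. -/
noncomputable def norm (M : OSRTM R A) : OSRTM R A where
  nQ := M.nQ * (nT M + 1)
  nE := M.nE
  blankE := M.blankE
  phE := M.phE
  blank_ne_ph := M.blank_ne_ph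
  start := enc M (M.start, 0)
  weights := M.weights
  weights_fin := M.weights_fin
  trans := {t' | ∃ j : Fin (nT M + 1), ∃ t ∈ M.trans, t' = lift M j t}
  trans_fin := by
    haveI := M.trans_fin.to_subtype
    have h : {t' | ∃ j : Fin (nT M + 1), ∃ t ∈ M.trans, t' = lift M j t} =
        Set.range (fun p : M.trans × Fin (nT M + 1) => lift M p.2 p.1) := by
      ext t'
      constructor
      · rintro ⟨j, t, ht, rfl⟩; exact ⟨(⟨t, ht⟩, j), rfl⟩
      · rintro ⟨⟨⟨t, ht⟩, j⟩, rfl⟩; exact ⟨j, t, ht, rfl⟩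
    rw [h]
    exact Set.finite_range _
  trans_wt := by
    rintro t' ⟨j, t, ht, rfl⟩ r hr
    exact M.trans_wt t ht r hr
  trans_orac := by
    rintro t' ⟨j, t, ht, rfl⟩ S hS
    exact M.trans_orac t ht S hS

lemma lift_injOn (M : OSRTM R A) (j : Fin (nT M + 1)) :
    Set.InjOn (lift M j) M.trans := by
  intro t ht t' ht' h
  have h2 : enc M (t.2.1.1, idx M t) = enc M (t'.2.1.1, idx M t') := congrArg (·.2.1.1) h
  have h3 : idx M t = idx M t' := congrArg (·.2) ((enc M).injective h2)
  exact idx_injOn M ht ht' h3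

lemma applicable_norm (M : OSRTM R A) (q : Fin M.nQ) (j : Fin (nT M + 1))
    (x : ℕ → M.Sym × R) (p : ℕ) :
    (norm M).applicable (enc M (q, j), x, p) = lift M j '' M.applicable (q, x, p) := by
  ext t'
  constructor
  · rintro ⟨⟨j', t, ht, rfl⟩, h1, h2⟩
    have hpair : (t.1.1, j') = (q, j) := (enc M).injective h1
    have hq : t.1.1 = q := congrArg Prod.fst hpair
    have hj : j' = j := congrArg Prod.snd hpair
    subst hj
    exact ⟨t, ⟨ht, hq, h2⟩, rfl⟩
  · rintro ⟨t, ⟨ht, h1, h2⟩, rfl⟩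
    exact ⟨⟨j, t, ht, rfl⟩, by exact congrArg (fun a => enc M (a, j)) h1, h2⟩

lemma stepTo_norm (M : OSRTM R A) (q : Fin M.nQ) (j : Fin (nT M + 1))
    (x : ℕ → M.Sym × R) (p : ℕ) (t : M.Trans) :
    (norm M).stepTo (lift M j t) (enc M (q, j), x, p) =
      (enc M ((M.stepTo t (q, x, p)).1, idx M t),
        (M.stepTo t (q, x, p)).2.1, (M.stepTo t (q, x, p)).2.2) := rfl

lemma wt_norm [CommSemiring R] (M : OSRTM R A) (q : Fin M.nQ) (j : Fin (nT M + 1))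
    (x : ℕ → M.Sym × R) (p : ℕ) (t : M.Trans) :
    (norm M).wt (lift M j t) (enc M (q, j), x, p) = M.wt t (q, x, p) := by
  obtain ⟨⟨q1, s1⟩, ⟨q2, s2⟩, d, w⟩ := t
  cases w <;> rfl

lemma val_norm [CommSemiring R] (M : OSRTM R A) :
    ∀ (n : ℕ) (q : Fin M.nQ) (j : Fin (nT M + 1)) (x : ℕ → M.Sym × R) (p : ℕ),
      (norm M).val n (enc M (q, j), x, p) = M.val n (q, x, p)
  | 0, _, _, _, _ => rfl
  | n + 1, q, j, x, p => by
    rw [OSRTM.val, OSRTM.val, applicable_norm]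
    by_cases h : M.applicable (q, x, p) = ∅
    · rw [if_pos (by rw [h]; exact Set.image_empty _), if_pos h]
    · rw [if_neg (by exact fun he => h (Set.image_eq_empty.1 he)), if_neg h]
      have hsub : M.applicable (q, x, p) ⊆ M.trans := fun t ht => ht.1
      refine Eq.trans (finsum_mem_image ((lift_injOn M j).mono hsub))
        (finsum_mem_congr rfl fun t ht => ?_)
      rw [wt_norm, stepTo_norm]
      congr 1
      exact val_norm M n (M.stepTo t (q, x, p)).1 (idx M t)
        (M.stepTo t (q, x, p)).2.1 (M.stepTo t (q, x, p)).2.2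

lemma pathLen_norm (M : OSRTM R A) :
    ∀ (n : ℕ) (q : Fin M.nQ) (j : Fin (nT M + 1)) (x : ℕ → M.Sym × R) (p : ℕ)
      (c'' : (norm M).Config),
      (norm M).PathLen n (enc M (q, j), x, p) c'' →
      ∃ c : M.Config, M.PathLen n (q, x, p) c
  | 0, q, j, x, p, c'', _ => ⟨(q, x, p), rfl⟩
  | n + 1, q, j, x, p, c'', h => by
    obtain ⟨c', ⟨t', ht', rfl⟩, hrest⟩ := h
    rw [applicable_norm] at ht'
    obtain ⟨t, hta, rfl⟩ := ht'
    rw [stepTo_norm] at hrest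
    obtain ⟨c, hc⟩ := pathLen_norm M n (M.stepTo t (q, x, p)).1 (idx M t)
      (M.stepTo t (q, x, p)).2.1 (M.stepTo t (q, x, p)).2.2 c'' hrest
    exact ⟨c, M.stepTo t (q, x, p), ⟨t, hta, rfl⟩, hc⟩

end OSRTMNorm

/-- Every terminating oracle SRTM is equivalent to one which has, for each
`(q, σ, q', σ', d)`, at most one transition label; the transformation preserves
polynomial boundedness of computation path lengths. -/
theorem OSRTM_normalize (R : Type) [CommSemiring R] (A : Type) [Fintype A]
    (M : OSRTM R A) (ℓ : List (A ⊕ R) → ℕ) (hb : M.BoundedBy ℓ) :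
    ∃ (M' : OSRTM R A) (ℓ' : List (A ⊕ R) → ℕ),
      M'.BoundedBy ℓ' ∧
      (∀ s, M'.output ℓ' s = M.output ℓ s) ∧
      ((∃ p : Polynomial ℕ, ∀ s, ℓ s ≤ p.eval s.length) →
        ∃ p' : Polynomial ℕ, ∀ s, ℓ' s ≤ p'.eval s.length) ∧
      ∀ (q q' : Fin M'.nQ) (σ σ' : A ⊕ Fin M'.nE) (d : Bool) (w w' : OLabel R),
        ((q, σ), (q', σ'), d, w) ∈ M'.trans →
        ((q, σ), (q', σ'), d, w') ∈ M'.trans → w = w' := by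
  refine ⟨OSRTMNorm.norm M, ℓ, ?_, ?_, fun h => h, ?_⟩
  · intro s n c h
    have hinit : (OSRTMNorm.norm M).initConfig s =
        (OSRTMNorm.enc M (M.start, 0), M.initTape s, 0) := rfl
    rw [hinit] at h
    obtain ⟨c', hc'⟩ := OSRTMNorm.pathLen_norm M n M.start 0 (M.initTape s) 0 c h
    exact hb s n c' hc'
  · intro s
    have hinit : (OSRTMNorm.norm M).initConfig s =
        (OSRTMNorm.enc M (M.start, 0), M.initTape s, 0) := rfl
    rw [OSRTM.output, OSRTM.output, hinit]
    exact OSRTMNorm.val_norm M (ℓ s) M.start 0 (M.initTape s) 0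
  · rintro q q' σ σ' d w w' ⟨j1, t1, ht1, he1⟩ ⟨j2, t2, ht2, he2⟩
    have h1 : q' = (OSRTMNorm.enc M (t1.2.1.1, OSRTMNorm.idx M t1)) :=
      congrArg (·.2.1.1) he1
    have h2 : q' = (OSRTMNorm.enc M (t2.2.1.1, OSRTMNorm.idx M t2)) :=
      congrArg (·.2.1.1) he2
    have hidx : OSRTMNorm.idx M t1 = OSRTMNorm.idx M t2 :=
      congrArg (·.2) ((OSRTMNorm.enc M).injective (h1 ▸ h2))
    have ht : t1 = t2 := OSRTMNorm.idx_injOn M ht1 ht2 hidx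
    have hw1 : w = t1.2.2.2 := congrArg (·.2.2.2) he1
    have hw2 : w' = t2.2.2.2 := congrArg (·.2.2.2) he2
    rw [hw1, hw2, ht]
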